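/- Let U = f₁, …, f_m, 𝟏 be a sequence of units with corresponding reason list R = R₁, …, R_m, R_⊥, where each fᵢ is either a decision (Rᵢ = ∗) or is deduced by unit propagation on the clause Rᵢ from the units {f₁,…,f_{i-1}}, the contradiction 𝟏 is deduced by unit propagation on R_⊥ from {f₁,…,f_m}, and at least one fᵢ is a decision. Then the 1-UIP-like clause learning procedure — starting with C = R_⊥ and, while C is not asserting, finding the largest i with ⟨C⟩ ⊆ span(f₁,…,fᵢ) but ⟨C⟩ ⊄ span(f₁,…,f_{i-1}), isolating fᵢ in C as C' ∨ f and in Rᵢ as Rᵢ' ∨ g with ⟨C'⟩, ⟨Rᵢ'⟩ ⊆ span(f₁,…,f_{i-1}), and replacing C by C' ∨ Rᵢ' ∨ (f+g) — terminates and outputs an asserting conflict clause. -/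

import Mathlib

namespace XorSAT

/-- An affine equation over `n` Boolean variables: the coefficients of the `n`
variables together with a right-hand side, i.e. a vector in `F₂^(n+1)`. -/
abbrev Eqn (n : ℕ) : Type := (Fin n → ZMod 2) × ZMod 2

/-- The equation `𝟏`, i.e. `0 = 1`, satisfied by no assignment. -/
def oneEq (n : ℕ) : Eqn n := (0, 1)

/-- An assignment `x` satisfies the equation `(a, b)` iff `∑ aᵢ xᵢ = b`. -/
def Sats {n : ℕ} (x : Fin n → ZMod 2) (e : Eqn n) : Prop :=
  (∑ i, e.1 i * x i) = e.2

/-- A linear clause: a (finite) disjunction of affine equations. -/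
abbrev Clause (n : ℕ) : Type := Finset (Eqn n)

/-- An assignment satisfies a linear clause iff it satisfies some equation in it. -/
def SatsClause {n : ℕ} (x : Fin n → ZMod 2) (C : Clause n) : Prop :=
  ∃ e ∈ C, Sats x e

/-- A clause is non-tautological if some assignment falsifies every equation of it. -/
def NonTaut {n : ℕ} (C : Clause n) : Prop :=
  ∃ x : Fin n → ZMod 2, ∀ e ∈ C, ¬ Sats x e

/-- The linear negation `⟨C⟩` of a clause `C = f₁ ∨ … ∨ f_m`:
the `F₂`-span of `f₁ + 𝟏, …, f_m + 𝟏`. -/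
def linneg {n : ℕ} (C : Clause n) : Submodule (ZMod 2) (Eqn n) :=
  Submodule.span (ZMod 2) ((fun e => e + oneEq n) '' (C : Set (Eqn n)))

/-- A set of equations is consistent if some assignment satisfies all of them. -/
def Consistent {n : ℕ} (U : Set (Eqn n)) : Prop :=
  ∃ x : Fin n → ZMod 2, ∀ e ∈ U, Sats x e

/-- The `F₂`-linear span of a set of equations, as a submodule. -/
def spn {n : ℕ} (U : Set (Eqn n)) : Submodule (ZMod 2) (Eqn n) :=
  Submodule.span (ZMod 2) U


/-- Unit propagation on clause `C` from units `U` may deduce the equation `f`. -/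
def CanDeduce {n : ℕ} (U : Set (Eqn n)) (C : Clause n) (f : Eqn n) : Prop :=
  ¬ linneg C ≤ spn U ∧ linneg C ≤ spn (insert (f + oneEq n) U) ∧
    f ∉ spn U ∧ f + oneEq n ∉ spn U

/-- One step of unit propagation on the clause set `Δ`: a clause `C ∈ Δ` either
deduces the contradiction `𝟏` (if `⟨C⟩ ⊆ span U`) or deduces some equation `f`. -/
def UPStep {n : ℕ} (Δ : Set (Clause n)) (U U' : Set (Eqn n)) : Prop :=
  Consistent U ∧ ∃ C ∈ Δ,
    (linneg C ≤ spn U ∧ U' = insert (oneEq n) U) ∨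
    (∃ f, CanDeduce U C f ∧ U' = insert f U)

/-- A (finite) run of unit propagation on the clause set `Δ`. -/
def UPRun {n : ℕ} (Δ : Set (Clause n)) : Set (Eqn n) → Set (Eqn n) → Prop :=
  Relation.ReflTransGen (UPStep Δ)

/-- The units `V` are conflict-like w.r.t. `Δ`: some run of unit propagation
starting from `V` and using clauses of `Δ` deduces `𝟏`. -/
def ConflictLike {n : ℕ} (Δ : Set (Clause n)) (V : Set (Eqn n)) : Prop :=
  ∃ W, UPRun Δ V W ∧ oneEq n ∈ W

/-- The decomposition `(V', f)` is absorbed by `Δ`: unit propagation from units `V'`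
with clauses `Δ` either derives `𝟏` or derives a unit set whose span contains `f + 𝟏`. -/
def Absorbed {n : ℕ} (Δ : Set (Clause n)) (V' : Set (Eqn n)) (f : Eqn n) : Prop :=
  ∃ W, UPRun Δ V' W ∧ (oneEq n ∈ W ∨ f + oneEq n ∈ spn W)

/-- Unit propagation on the clause `C` from units `U` results in some
propagation (deducing `𝟏` or deducing some equation). -/
def CanPropagate {n : ℕ} (U : Set (Eqn n)) (C : Clause n) : Prop :=
  linneg C ≤ spn U ∨ ∃ f, CanDeduce U C f

/-- The units `f_j` with (0-based) index `j < i`, i.e. the paper's `U_i` is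
`prefixSet m f i` when `f_1, …, f_i` are `f 0, …, f (i-1)`. -/
def prefixSet {n : ℕ} (m : ℕ) (f : Fin m → Eqn n) (i : ℕ) : Set (Eqn n) :=
  {e | ∃ j : Fin m, (j : ℕ) < i ∧ e = f j}

/-- The level of the unit `f i`: the number of decisions among `f 0, …, f i`. -/
def levelOf {n : ℕ} (m : ℕ) (R : Fin m → Option (Clause n)) (i : Fin m) : ℕ :=
  (Finset.univ.filter (fun j : Fin m => (j : ℕ) ≤ (i : ℕ) ∧ (R j).isNone)).card

/-- The total number of decisions, i.e. the level of the final contradiction `𝟏`. -/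
def totalDecs {n : ℕ} (m : ℕ) (R : Fin m → Option (Clause n)) : ℕ :=
  (Finset.univ.filter (fun j : Fin m => (R j).isNone)).card

/-- The set of units of level at most `k`. -/
def levelPrefixSet {n : ℕ} (m : ℕ) (f : Fin m → Eqn n)
    (R : Fin m → Option (Clause n)) (k : ℕ) : Set (Eqn n) :=
  {e | ∃ j : Fin m, levelOf m R j ≤ k ∧ e = f j}

/-- A clause is asserting if its asserting level (the smallest level `k` such
that the units of level at most `k` allow unit propagation on it) is less than
the level of the contradiction `𝟏`. -/
def AssertingCl {n : ℕ} (m : ℕ) (f : Fin m → Eqn n)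
    (R : Fin m → Option (Clause n)) (C : Clause n) : Prop :=
  ∃ k < totalDecs m R, CanPropagate (levelPrefixSet m f R k) C

/-- The list of reason clauses, including the conflict reason `R_⊥`. -/
def reasonSet {n : ℕ} {m : ℕ} (R : Fin m → Option (Clause n)) (Rbot : Clause n) :
    Set (Clause n) :=
  {D | (∃ i, R i = some D) ∨ D = Rbot}

/-- A conflict clause w.r.t. the trail `f` and reasons `R, R_⊥`:
`⟨C⟩ ⊆ span(f_1, …, f_m)` and unit propagation starting with units `⟨C⟩` and
the reason clauses produces a contradiction. -/
def ConflictCl {n : ℕ} (m : ℕ) (f : Fin m → Eqn n)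
    (R : Fin m → Option (Clause n)) (Rbot : Clause n) (C : Clause n) : Prop :=
  linneg C ≤ spn (prefixSet m f m) ∧
  ConflictLike (reasonSet R Rbot) ((linneg C : Submodule (ZMod 2) (Eqn n)) : Set (Eqn n))

/-- One iteration of the 1-UIP-like clause learning loop: if the current clause
`C` is not asserting, find the largest `i` with `⟨C⟩ ⊆ span(f_1, …, f_i)` but
`⟨C⟩ ⊄ span(f_1, …, f_{i-1})`, isolate `f_i` in `C` (as `C₀ ∨ g` with
`⟨C₀⟩ ⊆ span(f_1, …, f_{i-1})`) and in its reason `R_i` (as `R₀ ∨ h`), and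
replace `C` by `C₀ ∨ R₀ ∨ (g+h)`. -/
def LearnStep {n : ℕ} (m : ℕ) (f : Fin m → Eqn n)
    (R : Fin m → Option (Clause n)) (C C' : Clause n) : Prop :=
  ¬ AssertingCl m f R C ∧
  ∃ (i : Fin m) (Ci : Clause n), R i = some Ci ∧
    linneg C ≤ spn (prefixSet m f ((i : ℕ) + 1)) ∧
    ¬ linneg C ≤ spn (prefixSet m f (i : ℕ)) ∧
    ∃ (C₀ R₀ : Clause n) (g h : Eqn n),
      linneg (insert g C₀) = linneg C ∧ linneg C₀ ≤ spn (prefixSet m f (i : ℕ)) ∧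
      linneg (insert h R₀) = linneg Ci ∧ linneg R₀ ≤ spn (prefixSet m f (i : ℕ)) ∧
      C' = insert (g + h) (C₀ ∪ R₀)

section Aux

variable {n : ℕ}

lemma zmod2_cases (c : ZMod 2) : c = 0 ∨ c = 1 := by revert c; decide

lemma eqn_add_self (x : Eqn n) : x + x = 0 := by
  have : x + x = (1 + 1 : ZMod 2) • x := by rw [add_smul, one_smul]
  rw [this, show (1 + 1 : ZMod 2) = 0 by decide, zero_smul]

lemma spn_mono {U V : Set (Eqn n)} (h : U ⊆ V) : spn U ≤ spn V :=
  Submodule.span_mono h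

lemma spn_coe (V : Submodule (ZMod 2) (Eqn n)) : spn (V : Set (Eqn n)) = V :=
  Submodule.span_eq V

lemma mem_spn_insert_elim {a x : Eqn n} {U : Set (Eqn n)}
    (hx : x ∈ spn (insert a U)) : x ∈ spn U ∨ x + a ∈ spn U := by
  rcases (Submodule.mem_span_insert).1 hx with ⟨c, z, hz, rfl⟩
  rcases zmod2_cases c with rfl | rfl
  · left; simpa [spn] using hz
  · right
    have h2 : (1 : ZMod 2) • a + z + a = z := by
      rw [one_smul, add_comm a z, add_assoc, eqn_add_self a, add_zero]
    rw [h2]; exact hz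

lemma linneg_insert (a : Eqn n) (C : Clause n) :
    linneg (insert a C) = Submodule.span (ZMod 2) {a + oneEq n} ⊔ linneg C := by
  unfold linneg
  rw [Finset.coe_insert, Set.image_insert_eq, Submodule.span_insert]

lemma linneg_union (C D : Clause n) : linneg (C ∪ D) = linneg C ⊔ linneg D := by
  unfold linneg
  rw [Finset.coe_union, Set.image_union, Submodule.span_union]

lemma linneg_mono {C D : Clause n} (h : C ⊆ D) : linneg C ≤ linneg D :=
  Submodule.span_mono (Set.image_mono (by exact_mod_cast h))

lemma mem_linneg_of_mem {e : Eqn n} {C : Clause n} (h : e ∈ C) :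
    e + oneEq n ∈ linneg C :=
  Submodule.subset_span ⟨e, by exact_mod_cast h, rfl⟩

lemma linneg_le_iff {C : Clause n} {P : Submodule (ZMod 2) (Eqn n)} :
    linneg C ≤ P ↔ ∀ e ∈ C, e + oneEq n ∈ P := by
  unfold linneg
  rw [Submodule.span_le]
  constructor
  · intro h e he; exact h ⟨e, by exact_mod_cast he, rfl⟩
  · rintro h x ⟨e, he, rfl⟩; exact h e (by exact_mod_cast he)

lemma oneEq_ne_zero : oneEq n ≠ 0 := by
  intro h
  have := congrArg Prod.snd h
  simp [oneEq] at this

end Aux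
section Aux2

variable {n : ℕ}

lemma consistent_of_one_notin {U : Set (Eqn n)} (h : oneEq n ∉ spn U) :
    Consistent U := by
  classical
  set V : Submodule (ZMod 2) (Eqn n) := spn U with hV
  have hq : Submodule.Quotient.mk (p := V) (oneEq n) ≠ 0 := by
    intro h0; exact h ((Submodule.Quotient.mk_eq_zero V).1 h0)
  have := (Module.forall_dual_apply_eq_zero_iff (ZMod 2)
      (Submodule.Quotient.mk (p := V) (oneEq n))).not.2 hq
  push_neg at this
  obtain ⟨φ, hφ⟩ := this
  set ψ : Eqn n →ₗ[ZMod 2] ZMod 2 := φ.comp V.mkQ with hψ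
  have hψone : ψ (oneEq n) = 1 := by
    rcases zmod2_cases (ψ (oneEq n)) with h0 | h1
    · exact absurd (by simpa [hψ, Submodule.mkQ_apply] using h0) hφ
    · exact h1
  have hψU : ∀ e ∈ U, ψ e = 0 := by
    intro e he
    have : e ∈ V := Submodule.subset_span he
    simp [hψ, Submodule.mkQ_apply, (Submodule.Quotient.mk_eq_zero V).2 this]
  refine ⟨fun i => ψ (Pi.single i 1, 0), ?_⟩
  rintro ⟨a, b⟩ he
  have hdecomp : ((a, b) : Eqn n)
      = (∑ i, a i • ((Pi.single i 1, 0) : Eqn n)) + b • oneEq n := by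
    have h1 : (∑ i, a i • ((Pi.single i 1, 0) : Eqn n))
        = ((∑ i, a i • Pi.single i (1 : ZMod 2)), 0) := by
      rw [Prod.ext_iff]
      constructor
      · rw [Prod.fst_sum]; rfl
      · rw [Prod.snd_sum]; simp
    rw [h1]
    have h2 : (∑ i, a i • Pi.single i (1 : ZMod 2)) = a := by
      have : ∀ i, a i • Pi.single i (1 : ZMod 2) = (Pi.single i (a i) : Fin n → ZMod 2) := by
        intro i
        funext j
        by_cases hji : j = i
        · subst hji; simp
        · simp [Pi.single_apply, hji]
      simp_rw [this]
      exact Finset.univ_sum_single a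
    rw [h2]
    rw [Prod.ext_iff]
    constructor <;> simp [oneEq]
  have hz := hψU _ he
  rw [hdecomp] at hz
  rw [map_add, map_sum] at hz
  simp_rw [map_smul] at hz
  rw [hψone] at hz
  have : (∑ i, a i * ψ ((Pi.single i 1, 0) : Eqn n)) + b = 0 := by
    simpa [smul_eq_mul] using hz
  show (∑ i, a i * ψ ((Pi.single i 1, 0) : Eqn n)) = b
  have hb : b + b = 0 := by
    rcases zmod2_cases b with rfl | rfl <;> decide
  calc (∑ i, a i * ψ ((Pi.single i 1, 0) : Eqn n))
      = (∑ i, a i * ψ ((Pi.single i 1, 0) : Eqn n)) + (b + b) := by rw [hb, add_zero]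
    _ = ((∑ i, a i * ψ ((Pi.single i 1, 0) : Eqn n)) + b) + b := by ring
    _ = b := by rw [this, zero_add]

lemma prefixSet_mono {m : ℕ} (f : Fin m → Eqn n) {i j : ℕ} (h : i ≤ j) :
    prefixSet m f i ⊆ prefixSet m f j := by
  rintro e ⟨k, hk, rfl⟩; exact ⟨k, lt_of_lt_of_le hk h, rfl⟩

lemma prefixSet_succ {m : ℕ} (f : Fin m → Eqn n) (i : Fin m) :
    prefixSet m f ((i : ℕ) + 1) = insert (f i) (prefixSet m f (i : ℕ)) := by
  ext e
  constructor
  · rintro ⟨j, hj, rfl⟩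
    rcases Nat.lt_succ_iff_lt_or_eq.1 hj with h | h
    · exact Or.inr ⟨j, h, rfl⟩
    · left; congr 1; exact Fin.ext h
  · rintro (rfl | ⟨j, hj, rfl⟩)
    · exact ⟨i, Nat.lt_succ_self _, rfl⟩
    · exact ⟨j, Nat.lt_succ_of_lt hj, rfl⟩

lemma prefixSet_zero {m : ℕ} (f : Fin m → Eqn n) : prefixSet m f 0 = ∅ := by
  ext e; simp [prefixSet]

lemma prefixSet_stab {m : ℕ} (f : Fin m → Eqn n) {j : ℕ} (h : m ≤ j) :
    prefixSet m f j = prefixSet m f m := by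
  ext e
  constructor
  · rintro ⟨k, _, rfl⟩; exact ⟨k, k.2, rfl⟩
  · rintro ⟨k, hk, rfl⟩; exact ⟨k, lt_of_lt_of_le k.2 h, rfl⟩

lemma one_notin_spn_prefix {m : ℕ} {f : Fin m → Eqn n}
    (hyp : ∀ i : Fin m, f i + oneEq n ∉ spn (prefixSet m f (i : ℕ))) :
    ∀ j : ℕ, oneEq n ∉ spn (prefixSet m f j) := by
  intro j
  induction j with
  | zero =>
    rw [prefixSet_zero]
    intro hmem
    have : oneEq n ∈ (⊥ : Submodule (ZMod 2) (Eqn n)) := by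
      simpa [spn, Submodule.span_empty] using hmem
    exact oneEq_ne_zero (by simpa using this)
  | succ k ih =>
    by_cases hk : k < m
    · rw [show k + 1 = ((⟨k, hk⟩ : Fin m) : ℕ) + 1 by simp, prefixSet_succ]
      intro hmem
      rcases mem_spn_insert_elim hmem with h | h
      · exact ih h
      · exact hyp ⟨k, hk⟩ (by
          have : oneEq n + f ⟨k, hk⟩ = f ⟨k, hk⟩ + oneEq n := add_comm _ _
          rwa [this] at h)
    · push_neg at hk
      rw [prefixSet_stab f (by omega)]
      rw [prefixSet_stab f hk] at ih
      exact ih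

end Aux2
set_option linter.unnecessarySimpa false
section Aux3

variable {n : ℕ}

/-- Isolate a "critical" literal in a clause. -/
lemma decompose (D : Clause n) (P : Submodule (ZMod 2) (Eqn n)) (w : Eqn n)
    (hsplit : ∀ e ∈ D, e + oneEq n ∈ P ∨ e + oneEq n + w ∈ P)
    (hnle : ¬ linneg D ≤ P) :
    ∃ (g : Eqn n) (D₀ : Clause n), g ∈ D ∧ g + oneEq n ∉ P ∧ g + oneEq n + w ∈ P ∧
      linneg (insert g D₀) = linneg D ∧ linneg D₀ ≤ P := by
  classical
  have : ∃ g ∈ D, g + oneEq n ∉ P := by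
    by_contra hcon
    push_neg at hcon
    exact hnle (linneg_le_iff.2 hcon)
  obtain ⟨g, hgD, hgP⟩ := this
  have hgw : g + oneEq n + w ∈ P := (hsplit g hgD).resolve_left hgP
  refine ⟨g, D.image (fun e => if e + oneEq n ∈ P then e else e + g + oneEq n),
    hgD, hgP, hgw, ?_, ?_⟩
  · -- linneg equality
    apply le_antisymm
    · rw [linneg_le_iff]
      intro e he
      rcases Finset.mem_insert.1 he with rfl | he
      · exact mem_linneg_of_mem hgD
      · rcases Finset.mem_image.1 he with ⟨e', he', rfl⟩
        by_cases hP : e' + oneEq n ∈ P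
        · simp only [hP, if_pos]
          exact mem_linneg_of_mem he'
        · simp only [hP, if_neg, not_false_iff]
          have h1 : e' + g + oneEq n + oneEq n = (e' + oneEq n) + (g + oneEq n) := by
            rw [show (e' + oneEq n) + (g + oneEq n) = e' + g + (oneEq n + oneEq n) by abel,
              eqn_add_self, add_zero]
            abel
          rw [h1]
          exact (linneg D).add_mem (mem_linneg_of_mem he') (mem_linneg_of_mem hgD)
    · rw [linneg_le_iff]
      intro e he
      by_cases hP : e + oneEq n ∈ P
      · have : e ∈ insert g (D.image (fun e => if e + oneEq n ∈ P then e else e + g + oneEq n)) := by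
          refine Finset.mem_insert_of_mem (Finset.mem_image.2 ⟨e, he, ?_⟩)
          simp [hP]
        exact mem_linneg_of_mem this
      · have hmem : e + g + oneEq n ∈ insert g (D.image (fun e => if e + oneEq n ∈ P then e else e + g + oneEq n)) := by
          refine Finset.mem_insert_of_mem (Finset.mem_image.2 ⟨e, he, ?_⟩)
          simp [hP]
        have h1 : e + oneEq n = ((e + g + oneEq n) + oneEq n) + (g + oneEq n) := by
          rw [show ((e + g + oneEq n) + oneEq n) + (g + oneEq n) =
              e + oneEq n + (g + g) + (oneEq n + oneEq n) by abel,
            eqn_add_self, eqn_add_self, add_zero, add_zero]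
        rw [h1]
        exact Submodule.add_mem _ (mem_linneg_of_mem hmem) (mem_linneg_of_mem (Finset.mem_insert_self _ _))
  · -- linneg D₀ ≤ P
    rw [linneg_le_iff]
    intro e he
    rcases Finset.mem_image.1 he with ⟨e', he', rfl⟩
    by_cases hP : e' + oneEq n ∈ P
    · simpa [hP] using hP
    · simp only [hP, if_neg, not_false_iff]
      have hw : e' + oneEq n + w ∈ P := (hsplit e' he').resolve_left hP
      have h1 : e' + g + oneEq n + oneEq n = (e' + oneEq n + w) + (g + oneEq n + w) := by
        rw [show (e' + oneEq n + w) + (g + oneEq n + w) =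
            e' + g + (oneEq n + oneEq n) + (w + w) by abel,
          eqn_add_self, eqn_add_self, add_zero, add_zero]
        abel
      rw [h1]
      exact P.add_mem hw hgw

end Aux3
section Aux4

variable {n : ℕ}

lemma step_facts {m : ℕ} {f : Fin m → Eqn n} {R : Fin m → Option (Clause n)}
    (hreason : ∀ (i : Fin m) (Ci : Clause n), R i = some Ci →
      CanDeduce (prefixSet m f (i : ℕ)) Ci (f i))
    {C C' : Clause n} (hs : LearnStep m f R C C') :
    ∃ (i : Fin m) (Ci : Clause n) (h : Eqn n),
      R i = some Ci ∧
      linneg C' ≤ spn (prefixSet m f (i : ℕ)) ∧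
      ¬ linneg C ≤ spn (prefixSet m f (i : ℕ)) ∧
      ¬ linneg Ci ≤ spn (prefixSet m f (i : ℕ)) ∧
      h ∉ spn (prefixSet m f (i : ℕ)) ∧
      h + oneEq n ∉ spn (prefixSet m f (i : ℕ)) ∧
      linneg Ci ≤ spn (insert (h + oneEq n)
        ((linneg C' : Submodule (ZMod 2) (Eqn n)) : Set (Eqn n))) ∧
      linneg C ≤ spn (insert h
        ((linneg C' : Submodule (ZMod 2) (Eqn n)) : Set (Eqn n))) := by
  obtain ⟨-, i, Ci, hRi, hCle, hCnle, C₀, R₀, g, h, hgC, hC₀, hhR, hR₀, rfl⟩ := hs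
  obtain ⟨hCinle, hCile, hfi, hfi1⟩ := hreason i Ci hRi
  set P := spn (prefixSet m f (i : ℕ)) with hP
  rw [linneg_insert] at hgC hhR
  -- g + 1 facts
  have hg1C : g + oneEq n ∈ linneg C := by
    rw [← hgC]; exact Submodule.mem_sup_left (Submodule.mem_span_singleton_self _)
  have hg1nP : g + oneEq n ∉ P := by
    intro hmem
    apply hCnle
    rw [← hgC, sup_le_iff]
    exact ⟨by rwa [Submodule.span_singleton_le_iff_mem], hC₀⟩
  have hg1pre : g + oneEq n ∈ spn (prefixSet m f ((i : ℕ) + 1)) := hCle hg1C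
  rw [prefixSet_succ] at hg1pre
  have hgfi : g + oneEq n + f i ∈ P := by
    rcases mem_spn_insert_elim hg1pre with hmem | hmem
    · exact absurd hmem hg1nP
    · exact hmem
  -- h + 1 facts
  have hh1Ci : h + oneEq n ∈ linneg Ci := by
    rw [← hhR]; exact Submodule.mem_sup_left (Submodule.mem_span_singleton_self _)
  have hh1nP : h + oneEq n ∉ P := by
    intro hmem
    apply hCinle
    rw [← hhR, sup_le_iff]
    exact ⟨by rwa [Submodule.span_singleton_le_iff_mem], hR₀⟩
  have hh1pre : h + oneEq n ∈ spn (insert (f i + oneEq n) (prefixSet m f (i : ℕ))) :=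
    hCile hh1Ci
  have hhfi : h + oneEq n + (f i + oneEq n) ∈ P := by
    rcases mem_spn_insert_elim hh1pre with hmem | hmem
    · exact absurd hmem hh1nP
    · exact hmem
  have hhfi' : h + f i ∈ P := by
    have : h + oneEq n + (f i + oneEq n) = h + f i + (oneEq n + oneEq n) := by abel
    rwa [this, eqn_add_self, add_zero] at hhfi
  have hghP : g + h + oneEq n ∈ P := by
    have heq : (g + oneEq n + f i) + (h + f i) = g + h + oneEq n := by
      rw [show (g + oneEq n + f i) + (h + f i) = g + h + oneEq n + (f i + f i) by abel,
        eqn_add_self, add_zero]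
    rw [← heq]
    exact P.add_mem hgfi hhfi'
  have hC'le : linneg (insert (g + h) (C₀ ∪ R₀)) ≤ P := by
    rw [linneg_insert, linneg_union, sup_le_iff, sup_le_iff]
    exact ⟨by rwa [Submodule.span_singleton_le_iff_mem], hC₀, hR₀⟩
  have hhnP : h ∉ P := by
    intro hmem
    apply hfi
    have : f i = (h + f i) + h := by
      rw [show (h + f i) + h = f i + (h + h) by abel, eqn_add_self, add_zero]
    rw [this]; exact P.add_mem hhfi' hmem
  set U₀ : Set (Eqn n) := ((linneg (insert (g + h) (C₀ ∪ R₀)) :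
    Submodule (ZMod 2) (Eqn n)) : Set (Eqn n)) with hU₀
  have hspnU₀ : spn U₀ = linneg (insert (g + h) (C₀ ∪ R₀)) := spn_coe _
  have hCinleU : ¬ linneg Ci ≤ spn U₀ := by
    intro hmem; exact hCinle (le_trans hmem (by rw [hspnU₀]; exact hC'le))
  refine ⟨i, Ci, h, hRi, hC'le, hCnle, hCinle, hhnP, hh1nP, ?_, ?_⟩
  · -- linneg Ci ≤ spn (insert (h+1) U₀)
    rw [← hhR, sup_le_iff]
    constructor
    · rw [Submodule.span_singleton_le_iff_mem]
      exact Submodule.subset_span (Set.mem_insert _ _)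
    · refine le_trans ?_ (spn_mono (Set.subset_insert _ _))
      rw [hspnU₀]
      exact linneg_mono (Finset.Subset.trans Finset.subset_union_right (Finset.subset_insert _ _))
  · -- linneg C ≤ spn (insert h U₀)
    rw [← hgC, sup_le_iff]
    constructor
    · rw [Submodule.span_singleton_le_iff_mem]
      have hgh1 : g + h + oneEq n ∈ spn (insert h U₀) :=
        (spn_mono (Set.subset_insert _ _))
          (by rw [hspnU₀]; exact mem_linneg_of_mem (Finset.mem_insert_self _ _))
      have hhmem : h ∈ spn (insert h U₀) := Submodule.subset_span (Set.mem_insert _ _)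
      have : g + oneEq n = (g + h + oneEq n) + h := by
        rw [show (g + h + oneEq n) + h = g + oneEq n + (h + h) by abel, eqn_add_self, add_zero]
      rw [this]
      exact Submodule.add_mem _ hgh1 hhmem
    · refine le_trans ?_ (spn_mono (Set.subset_insert _ _))
      rw [hspnU₀]
      exact linneg_mono (Finset.Subset.trans Finset.subset_union_left (Finset.subset_insert _ _))

end Aux4
section Aux5

variable {n : ℕ}

lemma spn_insert (a : Eqn n) (U : Set (Eqn n)) :
    spn (insert a U) = Submodule.span (ZMod 2) {a} ⊔ spn U := by
  unfold spn; rw [Submodule.span_insert]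

lemma spn_insert_mono {a : Eqn n} {U V : Set (Eqn n)} (h : spn U ≤ spn V) :
    spn (insert a U) ≤ spn (insert a V) := by
  rw [spn_insert, spn_insert]
  exact sup_le_sup_left h _

lemma up_lift {Δ : Set (Clause n)} {V W : Set (Eqn n)} (hrun : UPRun Δ V W) :
    ∀ V' : Set (Eqn n), spn V ≤ spn V' → oneEq n ∉ spn V' →
    ∃ W', UPRun Δ V' W' ∧
      (oneEq n ∈ W' ∨ (spn W ≤ spn W' ∧ oneEq n ∉ spn W')) := by
  induction hrun using Relation.ReflTransGen.head_induction_on with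
  | refl =>
    intro V' hle h1
    exact ⟨V', Relation.ReflTransGen.refl, Or.inr ⟨hle, h1⟩⟩
  | head hstep htail ih =>
    intro V' hle h1
    obtain ⟨hcons, C, hCΔ, hcase⟩ := hstep
    have hconsV' : Consistent V' := consistent_of_one_notin h1
    rcases hcase with ⟨hCle, rfl⟩ | ⟨e, ⟨hnle, hecle, he, he1⟩, rfl⟩
    · -- contradiction step
      refine ⟨insert (oneEq n) V', Relation.ReflTransGen.single ?_, Or.inl (Set.mem_insert _ _)⟩
      exact ⟨hconsV', C, hCΔ, Or.inl ⟨le_trans hCle hle, rfl⟩⟩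
    · -- deduce step
      by_cases hCV' : linneg C ≤ spn V'
      · refine ⟨insert (oneEq n) V', Relation.ReflTransGen.single ?_, Or.inl (Set.mem_insert _ _)⟩
        exact ⟨hconsV', C, hCΔ, Or.inl ⟨hCV', rfl⟩⟩
      · by_cases heV' : e ∈ spn V'
        · refine ih V' ?_ h1
          rw [spn_insert, sup_le_iff]
          exact ⟨by rwa [Submodule.span_singleton_le_iff_mem], hle⟩
        · have he1V' : e + oneEq n ∉ spn V' := by
            intro hmem
            apply hCV'
            have h2 : spn (insert (e + oneEq n) V') = spn V' := by
              rw [spn_insert, sup_eq_right.2 (by rwa [Submodule.span_singleton_le_iff_mem])]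
            have h3 := le_trans hecle (spn_insert_mono (a := e + oneEq n) hle)
            rwa [h2] at h3
          have h1' : oneEq n ∉ spn (insert e V') := by
            intro hmem
            rcases mem_spn_insert_elim hmem with hm | hm
            · exact h1 hm
            · exact he1V' (by rwa [add_comm] at hm)
          obtain ⟨W', hrun', hd⟩ := ih (insert e V') (spn_insert_mono hle) h1'
          refine ⟨W', Relation.ReflTransGen.head ?_ hrun', hd⟩
          exact ⟨hconsV', C, hCΔ,
            Or.inr ⟨e, ⟨hCV', le_trans hecle (spn_insert_mono hle), heV', he1V'⟩, rfl⟩⟩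

end Aux5
section Aux6

variable {n : ℕ}

lemma levelOf_mono {m : ℕ} {R : Fin m → Option (Clause n)} {j j' : Fin m}
    (h : (j : ℕ) ≤ (j' : ℕ)) : levelOf m R j ≤ levelOf (n := n) m R j' := by
  apply Finset.card_le_card
  intro x hx
  rw [Finset.mem_filter] at hx ⊢
  exact ⟨hx.1, le_trans hx.2.1 h, hx.2.2⟩

lemma levelOf_pos {m : ℕ} {R : Fin m → Option (Clause n)} {i : Fin m}
    (h : R i = none) : 1 ≤ levelOf m R i := by
  rw [Nat.one_le_iff_ne_zero, ← Nat.pos_iff_ne_zero]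
  apply Finset.card_pos.2
  exact ⟨i, Finset.mem_filter.2 ⟨Finset.mem_univ _, le_refl _, by simp [h]⟩⟩

lemma levelOf_le_totalDecs {m : ℕ} {R : Fin m → Option (Clause n)} (i : Fin m) :
    levelOf m R i ≤ totalDecs m R := by
  apply Finset.card_le_card
  intro x hx
  rw [Finset.mem_filter] at hx ⊢
  exact ⟨hx.1, hx.2.2⟩

lemma level_iff {m : ℕ} {R : Fin m → Option (Clause n)} {i : Fin m}
    (hnone : R i = none) (j : Fin m) :
    levelOf m R j ≤ levelOf m R i - 1 ↔ (j : ℕ) < (i : ℕ) := by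
  constructor
  · intro hle
    by_contra hc
    push_neg at hc
    have h1 := levelOf_mono (R := R) hc
    have h2 := levelOf_pos (n := n) hnone
    omega
  · intro hlt
    have hsub : Finset.univ.filter (fun j' : Fin m => (j' : ℕ) ≤ (j : ℕ) ∧ (R j').isNone)
        ⊆ (Finset.univ.filter (fun j' : Fin m => (j' : ℕ) ≤ (i : ℕ) ∧ (R j').isNone)).erase i := by
      intro x hx
      rw [Finset.mem_filter] at hx
      rw [Finset.mem_erase, Finset.mem_filter]
      have hxj : (x : ℕ) ≤ (j : ℕ) := hx.2.1
      refine ⟨?_, hx.1, by omega, hx.2.2⟩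
      intro hxi
      subst hxi
      omega
    have hmem : i ∈ Finset.univ.filter (fun j' : Fin m => (j' : ℕ) ≤ (i : ℕ) ∧ (R j').isNone) :=
      Finset.mem_filter.2 ⟨Finset.mem_univ _, le_refl _, by simp [hnone]⟩
    calc levelOf m R j ≤ _ := Finset.card_le_card hsub
      _ = levelOf m R i - 1 := by rw [Finset.card_erase_of_mem hmem]; rfl

lemma levelPrefix_eq_prefix {m : ℕ} {f : Fin m → Eqn n} {R : Fin m → Option (Clause n)}
    {i : Fin m} (hnone : R i = none) :
    levelPrefixSet m f R (levelOf m R i - 1) = prefixSet m f (i : ℕ) := by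
  ext e
  constructor
  · rintro ⟨j, hj, rfl⟩; exact ⟨j, (level_iff hnone j).1 hj, rfl⟩
  · rintro ⟨j, hj, rfl⟩; exact ⟨j, (level_iff hnone j).2 hj, rfl⟩

lemma exists_learnstep {m : ℕ} {f : Fin m → Eqn n} {R : Fin m → Option (Clause n)}
    (hreason : ∀ (i : Fin m) (Ci : Clause n), R i = some Ci →
      CanDeduce (prefixSet m f (i : ℕ)) Ci (f i))
    (hdecision : ∀ i : Fin m, R i = none →
      f i ∉ spn (prefixSet m f (i : ℕ)) ∧ f i + oneEq n ∉ spn (prefixSet m f (i : ℕ)))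
    (hdec : ∃ i : Fin m, R i = none)
    {C : Clause n} (hCm : linneg C ≤ spn (prefixSet m f m))
    (hna : ¬ AssertingCl m f R C) : ∃ C', LearnStep m f R C C' := by
  classical
  obtain ⟨idec, hidec⟩ := hdec
  have htd : 0 < totalDecs (n := n) m R := by
    apply Finset.card_pos.2
    exact ⟨idec, Finset.mem_filter.2 ⟨Finset.mem_univ _, by simp [hidec]⟩⟩
  have h0 : ¬ linneg C ≤ spn (prefixSet m f 0) := by
    intro hle
    apply hna
    refine ⟨0, htd, Or.inl ?_⟩
    rw [prefixSet_zero] at hle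
    have : linneg C ≤ ⊥ := by simpa [spn, Submodule.span_empty] using hle
    exact le_trans this bot_le
  set P : ℕ → Prop := fun j => ¬ linneg C ≤ spn (prefixSet m f j) with hPdef
  set i := Nat.findGreatest P m with hidef
  have hPi : P i := Nat.findGreatest_spec (Nat.zero_le m) h0
  have him : i ≤ m := Nat.findGreatest_le m
  have hilt : i < m := by
    rcases Nat.lt_or_ge i m with h | h
    · exact h
    · exfalso; apply hPi; rw [show i = m by omega]; exact hCm
  have hsucc : linneg C ≤ spn (prefixSet m f (i + 1)) := by
    by_contra hc
    exact Nat.findGreatest_is_greatest (Nat.lt_succ_self i) (by omega) hc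
  set iF : Fin m := ⟨i, hilt⟩ with hiF
  have hiFcoe : (iF : ℕ) = i := rfl
  -- the critical unit is not a decision
  have hRiF : R iF ≠ none := by
    intro hnone
    apply hna
    obtain ⟨hfi, hfi1⟩ := hdecision iF hnone
    obtain ⟨x, hxC, hxP⟩ := SetLike.not_le_iff_exists.1 hPi
    have hxfi : x + f iF ∈ spn (prefixSet m f i) := by
      have hx1 : x ∈ spn (prefixSet m f (i + 1)) := hsucc hxC
      rw [show (i + 1) = (iF : ℕ) + 1 from rfl, prefixSet_succ] at hx1
      rcases mem_spn_insert_elim hx1 with hm | hm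
      · exact absurd hm hxP
      · exact hm
    refine ⟨levelOf m R iF - 1, ?_, ?_⟩
    · have := levelOf_pos (n := n) hnone
      have := levelOf_le_totalDecs (n := n) (R := R) iF
      omega
    · rw [levelPrefix_eq_prefix hnone]
      refine Or.inr ⟨x + oneEq n, hPi, ?_, ?_, ?_⟩
      · rw [show x + oneEq n + oneEq n = x by
          rw [add_assoc, eqn_add_self, add_zero]]
        intro y hy
        have hy1 : y ∈ spn (prefixSet m f (i + 1)) := hsucc hy
        rw [show (i + 1) = (iF : ℕ) + 1 from rfl, prefixSet_succ] at hy1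
        rcases mem_spn_insert_elim hy1 with hm | hm
        · exact spn_mono (Set.subset_insert _ _) hm
        · have hyx : y + x ∈ spn (prefixSet m f i) := by
            rw [show y + x = (y + f iF) + (x + f iF) from by
              rw [show (y + f iF) + (x + f iF) = y + x + (f iF + f iF) by abel,
                eqn_add_self, add_zero]]
            exact Submodule.add_mem _ hm hxfi
          rw [show y = (y + x) + x by rw [add_assoc, eqn_add_self, add_zero]]
          exact Submodule.add_mem _ (spn_mono (Set.subset_insert _ _) hyx)
            (Submodule.subset_span (Set.mem_insert _ _))
      · intro hmem
        apply hfi1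
        rw [show f iF + oneEq n = (x + oneEq n) + (x + f iF) by
          rw [show (x + oneEq n) + (x + f iF) = f iF + oneEq n + (x + x) by abel,
            eqn_add_self, add_zero]]
        exact Submodule.add_mem _ hmem hxfi
      · rw [show x + oneEq n + oneEq n = x by rw [add_assoc, eqn_add_self, add_zero]]
        exact hxP
  obtain ⟨Ci, hCi⟩ := Option.ne_none_iff_exists'.1 hRiF
  obtain ⟨hCinle, hCile, hfi, hfi1⟩ := hreason iF Ci hCi
  -- decompose C
  have hsplitC : ∀ e ∈ C, e + oneEq n ∈ spn (prefixSet m f i) ∨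
      e + oneEq n + f iF ∈ spn (prefixSet m f i) := by
    intro e he
    have h1 : e + oneEq n ∈ spn (prefixSet m f (i + 1)) := hsucc (mem_linneg_of_mem he)
    rw [show (i + 1) = (iF : ℕ) + 1 from rfl, prefixSet_succ] at h1
    exact mem_spn_insert_elim h1
  obtain ⟨g, C₀, hgC, hg1nP, hgw, hgEq, hC₀⟩ :=
    decompose C (spn (prefixSet m f i)) (f iF) hsplitC hPi
  have hsplitCi : ∀ e ∈ Ci, e + oneEq n ∈ spn (prefixSet m f i) ∨
      e + oneEq n + (f iF + oneEq n) ∈ spn (prefixSet m f i) := by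
    intro e he
    exact mem_spn_insert_elim (hCile (mem_linneg_of_mem he))
  obtain ⟨h, R₀, hhCi, hh1nP, hhw, hhEq, hR₀⟩ :=
    decompose Ci (spn (prefixSet m f i)) (f iF + oneEq n) hsplitCi hCinle
  exact ⟨insert (g + h) (C₀ ∪ R₀),
    hna, iF, Ci, hCi, hsucc, hPi, C₀, R₀, g, h, hgEq, hC₀, hhEq, hR₀, rfl⟩

end Aux6
/-- Given a trail `f_1, …, f_m, 𝟏` with reasons
`R_1, …, R_m, R_⊥` (decisions `R i = none`, propagations justified by unit
propagation, the final contradiction justified by `R_⊥`, and at least one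
decision), the 1-UIP-like clause learning procedure starting from `R_⊥`
terminates (there is no infinite run of learning steps), is never stuck at a
non-asserting clause, and every asserting clause it can reach is a conflict
clause; i.e. it terminates and outputs an asserting conflict clause. -/
theorem stmt10 {n : ℕ} (m : ℕ) (f : Fin m → Eqn n)
    (R : Fin m → Option (Clause n)) (Rbot : Clause n)
    (hreason : ∀ (i : Fin m) (Ci : Clause n), R i = some Ci →
      CanDeduce (prefixSet m f (i : ℕ)) Ci (f i))
    (hdecision : ∀ i : Fin m, R i = none →
      f i ∉ spn (prefixSet m f (i : ℕ)) ∧ f i + oneEq n ∉ spn (prefixSet m f (i : ℕ)))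
    (hbot : linneg Rbot ≤ spn (prefixSet m f m))
    (hdec : ∃ i : Fin m, R i = none) :
    (¬ ∃ c : ℕ → Clause n, c 0 = Rbot ∧ ∀ t, LearnStep m f R (c t) (c (t + 1))) ∧
    (∀ C : Clause n, Relation.ReflTransGen (LearnStep m f R) Rbot C →
      (¬ AssertingCl m f R C → ∃ C', LearnStep m f R C C') ∧
      (AssertingCl m f R C → AssertingCl m f R C ∧ ConflictCl m f R Rbot C)) := by
  classical
  have hfio : ∀ i : Fin m, f i + oneEq n ∉ spn (prefixSet m f (i : ℕ)) := by
    intro i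
    cases hR : R i with
    | none => exact (hdecision i hR).2
    | some Ci => exact (hreason i Ci hR).2.2.2
  have hone : ∀ j : ℕ, oneEq n ∉ spn (prefixSet m f j) := one_notin_spn_prefix hfio
  -- conflict clause invariant: base case
  have hbase : ConflictCl m f R Rbot Rbot := by
    refine ⟨hbot, insert (oneEq n) ((linneg Rbot : Submodule (ZMod 2) (Eqn n)) : Set (Eqn n)),
      Relation.ReflTransGen.single ?_, Set.mem_insert _ _⟩
    refine ⟨consistent_of_one_notin ?_, Rbot, Or.inr rfl, Or.inl ⟨?_, rfl⟩⟩
    · rw [spn_coe]; intro hm; exact hone m (hbot hm)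
    · rw [spn_coe]
  -- conflict clause invariant: step
  have hconfstep : ∀ C C', ConflictCl m f R Rbot C → LearnStep m f R C C' →
      ConflictCl m f R Rbot C' := by
    rintro C C' ⟨hC1, W, hrun, hW⟩ hs
    obtain ⟨i, Ci, h, hRi, hC'P, hCnP, hCinP, hhnP, hh1nP, hCiIns, hCIns⟩ :=
      step_facts hreason hs
    set U₀ : Set (Eqn n) := ((linneg C' : Submodule (ZMod 2) (Eqn n)) : Set (Eqn n)) with hU₀
    have hspnU₀ : spn U₀ = linneg C' := spn_coe _
    have h1U₀ : oneEq n ∉ spn U₀ := by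
      rw [hspnU₀]; intro hm; exact hone i (hC'P hm)
    have h1U₁ : oneEq n ∉ spn (insert h U₀) := by
      intro hm
      rcases mem_spn_insert_elim hm with hm | hm
      · exact h1U₀ hm
      · rw [add_comm] at hm
        rw [hspnU₀] at hm
        exact hh1nP (hC'P hm)
    have hstep1 : UPStep (reasonSet R Rbot) U₀ (insert h U₀) := by
      refine ⟨consistent_of_one_notin h1U₀, Ci, Or.inl ⟨i, hRi⟩,
        Or.inr ⟨h, ⟨?_, hCiIns, ?_, ?_⟩, rfl⟩⟩
      · intro hle
        rw [hspnU₀] at hle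
        exact hCinP (le_trans hle hC'P)
      · intro hm; rw [hspnU₀] at hm; exact hhnP (hC'P hm)
      · intro hm; rw [hspnU₀] at hm; exact hh1nP (hC'P hm)
    have hlle : spn ((linneg C : Submodule (ZMod 2) (Eqn n)) : Set (Eqn n))
        ≤ spn (insert h U₀) := by
      rw [spn_coe]; exact hCIns
    obtain ⟨W', hrun', hd⟩ := up_lift hrun (insert h U₀) hlle h1U₁
    have h1W' : oneEq n ∈ W' := by
      rcases hd with h' | ⟨hsp, h1'⟩
      · exact h'
      · exact absurd (hsp (Submodule.subset_span hW)) h1'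
    exact ⟨le_trans hC'P (spn_mono (prefixSet_mono f i.2.le)), W',
      Relation.ReflTransGen.head hstep1 hrun', h1W'⟩
  have hinv : ∀ C, Relation.ReflTransGen (LearnStep m f R) Rbot C →
      ConflictCl m f R Rbot C := by
    intro C hreach
    induction hreach with
    | refl => exact hbase
    | tail _ hstep ih => exact hconfstep _ _ ih hstep
  constructor
  · -- termination
    rintro ⟨c, hc0, hcs⟩
    have key : ∀ t, ∃ i : Fin m, ¬ linneg (c t) ≤ spn (prefixSet m f (i : ℕ)) ∧
        linneg (c (t + 1)) ≤ spn (prefixSet m f (i : ℕ)) := by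
      intro t
      obtain ⟨i, Ci, h, _, hC', hC, _⟩ := step_facts hreason (hcs t)
      exact ⟨i, hC, hC'⟩
    choose ix h1 h2 using key
    have hdecr : ∀ t, (ix (t + 1) : ℕ) < (ix t : ℕ) := by
      intro t
      by_contra hc'
      push_neg at hc'
      exact h1 (t + 1) (le_trans (h2 t) (spn_mono (prefixSet_mono f hc')))
    have hb : ∀ t, (ix t : ℕ) + t ≤ (ix 0 : ℕ) := by
      intro t
      induction t with
      | zero => simp
      | succ k ihk => have := hdecr k; omega
    have := hb ((ix 0 : ℕ) + 1)
    omega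
  · intro C hreach
    have hCc := hinv C hreach
    exact ⟨fun hna => exists_learnstep hreason hdecision hdec hCc.1 hna,
      fun hA => ⟨hA, hCc⟩⟩

end XorSAT
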